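/- The Weihrauch degree of id is the greatest degree that is a strong minimal cover: (a) there exists a problem h such that id is a strong minimal cover of h in the Weihrauch degrees; and (b) whenever a problem f is a strong minimal cover of some problem h in the Weihrauch degrees, then f ≤_W id. -/

import Mathlib

namespace WeihrauchPaper

/-- Baire space ℕ^ℕ. -/
abbrev Baire : Type := ℕ → ℕ

/-- Prepend a natural number to an element of Baire space: `(cons e q) 0 = e`, `(cons e q) (n+1) = q n`. -/
def cons (e : ℕ) (q : Baire) : Baire
  | 0 => e
  | n + 1 => q n

/-- Pairing of two elements of Baire space by interleaving. -/
def pair (p q : Baire) : Baire := fun n => if n % 2 = 0 then p (n / 2) else q (n / 2)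

def left (x : Baire) : Baire := fun n => x (2 * n)
def right (x : Baire) : Baire := fun n => x (2 * n + 1)

/-- The finite initial segment of `p` of length `k`. -/
def pref (p : Baire) (k : ℕ) : List ℕ := List.ofFn fun i : Fin k => p i

/-- Result of running the `e`-th partial computable function on the pair
(code of the length-`k` prefix of `p`, input `n`). -/
def query (e : ℕ) (p : Baire) (k n : ℕ) : Part ℕ :=
  Nat.Partrec.Code.eval (Denumerable.ofNat Nat.Partrec.Code e)
    (Nat.pair (Encodable.encode (pref p k)) n)

/-- `FEval e p q` : the `e`-th partial computable functional on Baire space, applied to `p`,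
is defined and equals `q`.  The value at `n` is obtained from the least prefix length `k`
on which the computation converges, which makes the functional single-valued. -/
def FEval (e : ℕ) (p q : Baire) : Prop :=
  ∀ n, ∃ k, query e p k n = Part.some (q n) ∧ ∀ k' < k, ¬ (query e p k' n).Dom

/-- Turing reducibility on Baire space: `q ≤_T p` iff `q = Φ_e(p)` for some `e`. -/
def TuringLE (q p : Baire) : Prop := ∃ e, FEval e p q

/-- Medvedev reducibility: `A ≤_M B` iff some partial computable functional is defined on all
of `B` and maps `B` into `A`. -/
def MedLE (A B : Set Baire) : Prop := ∃ e, ∀ q ∈ B, ∃ p, FEval e q p ∧ p ∈ A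

def MedEquiv (A B : Set Baire) : Prop := MedLE A B ∧ MedLE B A

def MedLT (A B : Set Baire) : Prop := MedLE A B ∧ ¬ MedLE B A

/-- The meet `P ∧ Q := 0⌢P ∪ 1⌢Q` in the Medvedev degrees. -/
def medMeet (P Q : Set Baire) : Set Baire := (cons 0 '' P) ∪ (cons 1 '' Q)

/-- `Succ p = { e⌢q : Φ_e(q) = p and q ≰_T p }`. -/
def Succ (p : Baire) : Set Baire :=
  {x | ∃ e q, x = cons e q ∧ FEval e q p ∧ ¬ TuringLE q p}

/-- A problem (partial multi-valued function on Baire space), represented as the map sending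
an instance to its (possibly empty) set of solutions. -/
abbrev Problem : Type := Baire → Set Baire

/-- The domain of a problem: the instances having at least one solution. -/
def dom (f : Problem) : Set Baire := {x | (f x).Nonempty}

/-- Weihrauch reducibility `f ≤_W g`. -/
def WLE (f g : Problem) : Prop :=
  ∃ eΦ eΨ, ∀ p ∈ dom f, ∃ p', FEval eΦ p p' ∧ p' ∈ dom g ∧
    ∀ q ∈ g p', ∃ r, FEval eΨ (pair p q) r ∧ r ∈ f p

def WEquiv (f g : Problem) : Prop := WLE f g ∧ WLE g f

def WLT (f g : Problem) : Prop := WLE f g ∧ ¬ WLE g f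

/-- The identity on Baire space, as a problem. -/
def idB : Problem := fun p => {p}

/-- The restriction of the identity to `X ⊆ ℕ^ℕ`, as a problem. -/
def idRestrict (X : Set Baire) : Problem := fun p => {q | p ∈ X ∧ q = p}

/-- The join `f ⊔ g`, with domain `{0}×dom f ∪ {1}×dom g` (coded via `cons`). -/
def join (f g : Problem) : Problem := fun x =>
  if x 0 = 0 then f (fun n => x (n + 1))
  else if x 0 = 1 then g (fun n => x (n + 1))
  else ∅

/-- The meet `f ⊓ g`, with domain `dom f × dom g` (coded via `pair`) and
`(f ⊓ g)(x,z) = {0}×f(x) ∪ {1}×g(z)` (coded via `cons`). -/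
def meet (f g : Problem) : Problem := fun x =>
  {y | left x ∈ dom f ∧ right x ∈ dom g ∧
    ((∃ z ∈ f (left x), y = cons 0 z) ∨ (∃ z ∈ g (right x), y = cons 1 z))}

/-- The constant sequence with value `n`. -/
def const (n : ℕ) : Baire := fun _ => n

/-- The characteristic function of `D ⊆ ℕ` as a problem: defined on the constant sequences,
with `χ_D(n)` the constantly-1 sequence if `n ∈ D` and the constantly-0 sequence otherwise. -/
def chi (D : Set ℕ) : Problem := fun x =>
  {y | ∃ n, x = const n ∧ ((n ∈ D ∧ y = const 1) ∨ (n ∉ D ∧ y = const 0))}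

/-- The set of non-computable elements of Baire space. -/
def NR : Set Baire := {q | ¬ Computable q}

/-- `f` is a minimal cover of `h` in the Weihrauch degrees. -/
def MinimalCover (f h : Problem) : Prop :=
  WLT h f ∧ ¬ ∃ g, WLT h g ∧ WLT g f

/-- `f` is a strong minimal cover of `h` in the Weihrauch degrees. -/
def StrongMinimalCover (f h : Problem) : Prop :=
  WLT h f ∧ ∀ g, WLT g f → WLE g h


/-! ### basic coordinate lemmas -/

lemma pair_even (p q : Baire) (i : ℕ) : pair p q (2 * i) = p i := by
  have h1 : 2 * i % 2 = 0 := by omega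
  have h2 : 2 * i / 2 = i := by omega
  simp [pair, h1, h2]

lemma pair_odd (p q : Baire) (i : ℕ) : pair p q (2 * i + 1) = q i := by
  have h1 : (2 * i + 1) % 2 = 1 := by omega
  have h2 : (2 * i + 1) / 2 = i := by omega
  simp [pair, h1, h2]

lemma left_pair (p q : Baire) : left (pair p q) = p := by
  funext n; simp [left, pair_even]

lemma right_pair (p q : Baire) : right (pair p q) = q := by
  funext n; simp [right, pair_odd]

lemma pref_length (p : Baire) (k : ℕ) : (pref p k).length = k := by simp [pref]

lemma pref_get?_lt (p : Baire) {i k : ℕ} (h : i < k) : (pref p k)[i]? = some (p i) := by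
  simp [pref, List.getElem?_ofFn, h]

lemma pref_get?_ge (p : Baire) {i k : ℕ} (h : k ≤ i) : (pref p k)[i]? = none := by
  simp [pref, List.getElem?_ofFn, Nat.not_lt.2 h]

lemma pref_getD (p : Baire) {i k : ℕ} (h : i < k) : (pref p k).getD i 0 = p i := by
  have := pref_get?_lt p h
  simp [List.getD_eq_getElem?_getD, this]

lemma feval_unique {e : ℕ} {p q q' : Baire} (h : FEval e p q) (h' : FEval e p q') : q = q' := by
  funext n
  obtain ⟨k, hk, hmin⟩ := h n
  obtain ⟨k', hk', hmin'⟩ := h' n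
  rcases lt_trichotomy k k' with hlt | heq | hlt
  · exact absurd (by rw [hk]; trivial) (hmin' _ hlt)
  · subst heq; have := hk.symm.trans hk'
    exact Part.some_injective (by simpa using this)
  · exact absurd (by rw [hk']; trivial) (hmin _ hlt)


open Nat.Partrec (Code)
open Nat.Partrec.Code

/-- From a partial recursive `F : List ℕ → ℕ →. ℕ` we get a code number `e` computing it on
(encoded list, input) pairs. -/
lemma exists_code₂ {F : List ℕ → ℕ →. ℕ} (hF : Partrec₂ F) :
    ∃ e : ℕ, ∀ (l : List ℕ) (n : ℕ),
      Nat.Partrec.Code.eval (Denumerable.ofNat Nat.Partrec.Code e)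
        (Nat.pair (Encodable.encode l) n) = F l n := by
  have hG : Partrec (fun m : ℕ =>
      (Part.ofOption (Encodable.decode (α := List ℕ) (Nat.unpair m).1)).bind
        (fun l => F l (Nat.unpair m).2)) := by
    apply Partrec.bind
    · exact Computable.ofOption
        (Computable.decode.comp (Computable.fst.comp Computable.unpair))
    · exact hF.comp Computable.snd
        ((Computable.snd.comp Computable.unpair).comp Computable.fst)
  obtain ⟨c, hc⟩ := Nat.Partrec.Code.exists_code.1 (Partrec.nat_iff.1 hG)
  refine ⟨Encodable.encode c, fun l n => ?_⟩
  rw [Denumerable.ofNat_encode, hc]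
  simp [Encodable.encodek]

/-- "Nice" direct codes: coordinatewise rearrangements with post-processing. -/
lemma exists_nice {σ : ℕ → ℕ} {g : ℕ → ℕ → ℕ} (hσ : Primrec σ) (hg : Primrec₂ g) :
    ∃ e, ∀ z : Baire, FEval e z (fun n => g n (z (σ n))) := by
  have hF : Partrec₂ (fun (l : List ℕ) (n : ℕ) =>
      (Part.ofOption ((l[σ n]?).map (g n)))) := by
    apply Computable.ofOption
    have h1 : Primrec₂ (fun (l : List ℕ) (n : ℕ) => l[σ n]?) :=
      (Primrec.list_getElem?.comp Primrec.fst (hσ.comp Primrec.snd)).to₂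
    exact (Primrec.option_map h1
      ((hg.comp (Primrec.snd.comp Primrec.fst) Primrec.snd).to₂ :
        Primrec₂ (fun (p : List ℕ × ℕ) (v : ℕ) => g p.2 v))).to_comp
  obtain ⟨e, he⟩ := exists_code₂ hF
  refine ⟨e, fun z n => ⟨σ n + 1, ?_, fun k' hk' => ?_⟩⟩
  · show query e z (σ n + 1) n = _
    rw [query, he, pref_get?_lt z (Nat.lt_succ_self _)]
    rfl
  · show ¬ (query e z k' n).Dom
    rw [query, he, pref_get?_ge z (Nat.lt_succ_iff.1 hk')]
    simp [Part.ofOption]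

/-- Post-processing of an arbitrary functional. -/
lemma exists_post {σ : ℕ → ℕ} {g : ℕ → ℕ → ℕ} (hσ : Primrec σ) (hg : Primrec₂ g) (b : ℕ) :
    ∃ e, ∀ z r : Baire, FEval b z r → FEval e z (fun n => g n (r (σ n))) := by
  have hF : Partrec₂ (fun (l : List ℕ) (n : ℕ) =>
      (Nat.Partrec.Code.eval (Denumerable.ofNat Code b)
        (Nat.pair (Encodable.encode l) (σ n))).map (g n)) := by
    apply Partrec.map
    · exact eval_part.comp (Computable.const _)
        (Primrec₂.natPair.to_comp.comp
          (Computable.encode.comp Computable.fst) (hσ.to_comp.comp Computable.snd))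
    · exact (hg.comp (Primrec.snd.comp Primrec.fst) Primrec.snd).to_comp.to₂
  obtain ⟨e, he⟩ := exists_code₂ hF
  refine ⟨e, fun z r hb n => ?_⟩
  obtain ⟨k, hk, hmin⟩ := hb (σ n)
  refine ⟨k, ?_, fun k' hk' => ?_⟩
  · show query e z k n = _
    rw [query, he]
    show (query b z k (σ n)).map (g n) = _
    rw [hk]; simp
  · show ¬ (query e z k' n).Dom
    rw [query, he]
    show ¬ ((query b z k' (σ n)).map (g n)).Dom
    simpa using hmin k' hk'

/-- Pre-composition of an arbitrary functional with a nice map. -/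
lemma exists_pre {σ : ℕ → ℕ} {g : ℕ → ℕ → ℕ} (hσ : Primrec σ) (hg : Primrec₂ g)
    (hbound : ∀ j m, j < m / 4 → σ j < m) (b : ℕ) :
    ∃ e, ∀ z w r : Baire, (∀ j, w j = g j (z (σ j))) → FEval b w r → FEval e z r := by
  have hF : Partrec₂ (fun (l : List ℕ) (n : ℕ) =>
      Nat.Partrec.Code.eval (Denumerable.ofNat Code b)
        (Nat.pair (Encodable.encode
          ((List.range (l.length / 4)).map (fun j => g j (l.getD (σ j) 0)))) n)) := by
    apply eval_part.comp (Computable.const _)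
    apply Primrec.to_comp
    apply Primrec₂.natPair.comp (α := List ℕ × ℕ)
    · apply Primrec.encode.comp
      apply Primrec.list_map
      · exact Primrec.list_range.comp
          (Primrec.nat_div.comp (Primrec.list_length.comp Primrec.fst) (Primrec.const 4))
      · exact (hg.comp Primrec.snd
          ((Primrec.list_getD 0).comp (Primrec.fst.comp Primrec.fst)
            (hσ.comp Primrec.snd))).to₂
    · exact Primrec.snd
  obtain ⟨e, he⟩ := exists_code₂ hF
  refine ⟨e, fun z w r hw hb => ?_⟩
  have key : ∀ m n, query e z m n = query b w (m / 4) n := by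
    intro m n
    rw [query, he]
    have hlist : (List.range ((pref z m).length / 4)).map
        (fun j => g j ((pref z m).getD (σ j) 0)) = pref w (m / 4) := by
      apply List.ext_getElem
      · simp [pref_length]
      · intro i h1 h2
        have him : i < m / 4 := by simpa [pref_length] using h1
        have hσi : σ i < m := hbound i m him
        simp only [List.getElem_map, List.getElem_range, pref, List.getElem_ofFn]
        rw [show (List.ofFn fun i : Fin m => z i) = pref z m from rfl, pref_getD z hσi]
        exact (hw i).symm
    rw [hlist]
    rfl
  intro n
  obtain ⟨k, hk, hmin⟩ := hb n
  have hex : ∃ m, m / 4 = k := ⟨4 * k, by omega⟩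
  refine ⟨Nat.find hex, ?_, fun m' hm' => ?_⟩
  · rw [key, Nat.find_spec hex, hk]
  · rw [key]
    have h1 : m' / 4 ≤ Nat.find hex / 4 := Nat.div_le_div_right (le_of_lt hm')
    rw [Nat.find_spec hex] at h1
    have h2 : m' / 4 ≠ k := Nat.find_min hex hm' -- wrong: find_min is about pred
    exact hmin _ (lt_of_le_of_ne h1 h2)



/-- Pairing the input with the output of an arbitrary functional. -/
lemma exists_pairSelf (a : ℕ) :
    ∃ e, ∀ p q : Baire, FEval a p q → FEval e p (pair p q) := by
  have h1 : Partrec₂ (fun (l : List ℕ) (j : ℕ) => Part.ofOption (l[j / 2]?)) := by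
    apply Computable.ofOption
    exact (Primrec.list_getElem?.comp Primrec.fst
      (Primrec.nat_div.comp Primrec.snd (Primrec.const 2))).to_comp
  obtain ⟨e1, he1⟩ := exists_code₂ h1
  have h2 : Partrec₂ (fun (l : List ℕ) (j : ℕ) =>
      Nat.Partrec.Code.eval (Denumerable.ofNat Code a)
        (Nat.pair (Encodable.encode l) (j / 2))) := by
    apply eval_part.comp (Computable.const _)
    exact (Primrec₂.natPair.comp (Primrec.encode.comp Primrec.fst)
      (Primrec.nat_div.comp Primrec.snd (Primrec.const 2))).to_comp
  obtain ⟨e2, he2⟩ := exists_code₂ h2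
  have h3 : Partrec₂ (fun (l : List ℕ) (j : ℕ) =>
      Nat.Partrec.Code.eval (Denumerable.ofNat Code (if j % 2 = 0 then e1 else e2))
        (Nat.pair (Encodable.encode l) j)) := by
    apply eval_part.comp
    · refine (Computable.ofNat Code).comp (Primrec.to_comp ?_)
      exact Primrec.ite
        (Primrec.eq.comp (Primrec.nat_mod.comp Primrec.snd (Primrec.const 2)) (Primrec.const 0))
        (Primrec.const e1) (Primrec.const e2)
    · exact (Primrec₂.natPair.comp (Primrec.encode.comp Primrec.fst) Primrec.snd).to_comp
  obtain ⟨e, he⟩ := exists_code₂ h3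
  refine ⟨e, fun p q ha n => ?_⟩
  by_cases hn : n % 2 = 0
  · refine ⟨n / 2 + 1, ?_, fun k' hk' => ?_⟩
    · show query e p (n / 2 + 1) n = _
      rw [query, he, if_pos hn, he1, pref_get?_lt p (Nat.lt_succ_self _)]
      have : pair p q n = p (n / 2) := by simp [pair, hn]
      rw [this]; rfl
    · show ¬ (query e p k' n).Dom
      rw [query, he, if_pos hn, he1, pref_get?_ge p (Nat.lt_succ_iff.1 hk')]
      simp [Part.ofOption]
  · obtain ⟨k, hk, hmin⟩ := ha (n / 2)
    refine ⟨k, ?_, fun k' hk' => ?_⟩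
    · show query e p k n = _
      rw [query, he]
      simp only [if_neg hn]
      rw [he2]
      show query a p k (n / 2) = _
      rw [hk]
      have : pair p q n = q (n / 2) := by simp [pair, hn]
      rw [this]
    · show ¬ (query e p k' n).Dom
      rw [query, he]
      simp only [if_neg hn]
      rw [he2]
      exact hmin k' hk'



/-! ### Part (a) -/

def C0 : Set Baire := {q | ∃ e, FEval e (const 0) q}

lemma dom_idB (x : Baire) : x ∈ dom idB := ⟨x, rfl⟩

lemma mem_dom_idRestrict {X : Set Baire} {x : Baire} : x ∈ dom (idRestrict X) ↔ x ∈ X :=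
  ⟨fun ⟨q, hq⟩ => hq.1, fun h => ⟨x, h, rfl⟩⟩

lemma exists_idCode : ∃ e, ∀ z : Baire, FEval e z z := by
  obtain ⟨e, he⟩ := exists_nice (σ := fun n => n) (g := fun _ v => v) Primrec.id Primrec₂.right
  exact ⟨e, fun z => he z⟩

lemma exists_leftCode : ∃ e, ∀ z : Baire, FEval e z (left z) := by
  obtain ⟨e, he⟩ := exists_nice (σ := fun n => 2 * n) (g := fun _ v => v)
    (Primrec.nat_mul.comp (Primrec.const 2) Primrec.id) Primrec₂.right
  exact ⟨e, fun z => he z⟩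

lemma exists_constCode {p : Baire} (hp : p ∈ C0) : ∃ c, ∀ z : Baire, FEval c z p := by
  obtain ⟨e0, he0⟩ := hp
  obtain ⟨c, hc⟩ := exists_pre (σ := fun _ => 0) (g := fun _ _ => 0)
    (Primrec.const 0) (Primrec₂.const 0) (by intro j m h; show 0 < m; omega) e0
  exact ⟨c, fun z => hc z (const 0) p (fun j => rfl) he0⟩

lemma C0_left {x : Baire} (hx : x ∈ C0) : left x ∈ C0 := by
  obtain ⟨e0, he0⟩ := hx
  obtain ⟨eL, hL⟩ := exists_post (σ := fun n => 2 * n) (g := fun _ v => v)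
    (Primrec.nat_mul.comp (Primrec.const 2) Primrec.id) Primrec₂.right e0
  exact ⟨eL, hL (const 0) x he0⟩

lemma partA1 : WLE (idRestrict C0ᶜ) idB := by
  obtain ⟨eid, hid⟩ := exists_idCode
  obtain ⟨eL, hL⟩ := exists_leftCode
  refine ⟨eid, eL, fun p hp => ⟨p, hid p, dom_idB p, fun q _ => ⟨p, ?_, ?_⟩⟩⟩
  · have := hL (pair p q)
    rwa [left_pair] at this
  · exact ⟨mem_dom_idRestrict.1 hp, rfl⟩

lemma partA2 : ¬ WLE idB (idRestrict C0ᶜ) := by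
  rintro ⟨eΦ, eΨ, hred⟩
  obtain ⟨p', h1, h2, -⟩ := hred (const 0) (dom_idB _)
  exact (mem_dom_idRestrict.1 h2) ⟨eΦ, h1⟩

lemma partA3 : ∀ g, WLT g idB → WLE g (idRestrict C0ᶜ) := by
  rintro g ⟨⟨eΦ, eΨ, hred⟩, hnot⟩
  have hdom : ∀ p ∈ dom g, p ∉ C0 := by
    intro p hp hpC
    apply hnot
    obtain ⟨c, hc⟩ := exists_constCode hpC
    obtain ⟨eL, hL⟩ := exists_leftCode
    refine ⟨c, eL, fun x _ => ⟨p, hc x, hp, fun q _ => ⟨x, ?_, rfl⟩⟩⟩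
    have := hL (pair x q)
    rwa [left_pair] at this
  obtain ⟨eΦ', hΦ'⟩ := exists_pairSelf eΦ
  obtain ⟨eΨ', hΨ'⟩ := exists_pre (σ := fun j => if j % 2 = 0 then j else 2 * j + 1)
    (g := fun _ v => v)
    (Primrec.ite (Primrec.eq.comp (Primrec.nat_mod.comp Primrec.id (Primrec.const 2))
        (Primrec.const 0)) Primrec.id
      (Primrec.nat_add.comp (Primrec.nat_mul.comp (Primrec.const 2) Primrec.id)
        (Primrec.const 1)))
    Primrec₂.right (by intro j m h; show (if j % 2 = 0 then j else 2 * j + 1) < m; split <;> omega) eΨ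
  refine ⟨eΦ', eΨ', fun p hp => ?_⟩
  obtain ⟨p₁, h1, -, h3⟩ := hred p hp
  obtain ⟨r, hr, hrg⟩ := h3 p₁ rfl
  refine ⟨pair p p₁, hΦ' p p₁ h1, mem_dom_idRestrict.2 ?_, ?_⟩
  · intro hC
    have hcl := C0_left hC
    rw [left_pair] at hcl
    exact hdom p hp hcl
  · rintro q ⟨-, rfl⟩
    refine ⟨r, ?_, hrg⟩
    apply hΨ' (pair p (pair p p₁)) (pair p p₁) r ?_ hr
    intro j
    rcases Nat.even_or_odd j with ⟨i, hi⟩ | ⟨i, hi⟩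
    · have hj : j = 2 * i := by omega
      subst hj
      have hmod : 2 * i % 2 = 0 := by omega
      rw [if_pos hmod]
      simp only [pair_even]
    · have hj : j = 2 * i + 1 := by omega
      subst hj
      have hmod : (2 * i + 1) % 2 = 1 := by omega
      rw [if_neg (by omega)]
      simp only [pair_odd]

/-! ### Part (b) helpers -/

open scoped Classical

/-- An explicit Weihrauch reduction with given codes. -/
def Red (f g : Problem) (α β : ℕ) : Prop :=
  ∀ p ∈ dom f, ∃ p', FEval α p p' ∧ p' ∈ dom g ∧
    ∀ q ∈ g p', ∃ r, FEval β (pair p q) r ∧ r ∈ f p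

lemma WLE_iff {f g : Problem} : WLE f g ↔ ∃ α β, Red f g α β := Iff.rfl

lemma cons_zero (e : ℕ) (q : Baire) : cons e q 0 = e := rfl
lemma cons_succ (e : ℕ) (q : Baire) (n : ℕ) : cons e q (n + 1) = q n := rfl

lemma mem_dom_meet {g f : Problem} {x : Baire} (h : x ∈ dom (meet g f)) :
    left x ∈ dom g ∧ right x ∈ dom f := by
  obtain ⟨y, hy⟩ := h
  exact ⟨hy.1, hy.2.1⟩

lemma chi_eq_const {D : Set ℕ} {x : Baire} (h : x ∈ dom (chi D)) : x = const (x 0) := by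
  obtain ⟨y, n, hx, -⟩ := h
  rw [hx]; rfl

lemma chi_bit_mem (D : Set ℕ) (n : ℕ) :
    const (if n ∈ D then 1 else 0) ∈ chi D (const n) := by
  by_cases h : n ∈ D
  · exact ⟨n, rfl, Or.inl ⟨h, by rw [if_pos h]⟩⟩
  · exact ⟨n, rfl, Or.inr ⟨h, by rw [if_neg h]⟩⟩

lemma chi_mem_eq {D : Set ℕ} {n : ℕ} {y : Baire} (hy : y ∈ chi D (const n)) :
    y = const (if n ∈ D then 1 else 0) := by
  obtain ⟨n', hn', hor⟩ := hy
  have hnn : n = n' := congrFun hn' 0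
  subst hnn
  rcases hor with ⟨hmem, rfl⟩ | ⟨hmem, rfl⟩
  · rw [if_pos hmem]
  · rw [if_neg hmem]

/-- The meet of anything with `f` reduces to `f`. -/
lemma meet_le_right (g f : Problem) : WLE (meet g f) f := by
  obtain ⟨eR, hR⟩ := exists_nice (σ := fun n => 2 * n + 1) (g := fun _ v => v)
    (Primrec.nat_add.comp (Primrec.nat_mul.comp (Primrec.const 2) Primrec.id)
      (Primrec.const 1)) Primrec₂.right
  obtain ⟨eΨ, hΨ⟩ := exists_nice (σ := fun n => if n = 0 then 0 else 2 * (n - 1) + 1)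
    (g := fun n v => if n = 0 then 1 else v)
    (Primrec.ite (Primrec.eq.comp Primrec.id (Primrec.const 0)) (Primrec.const 0)
      (Primrec.nat_add.comp
        (Primrec.nat_mul.comp (Primrec.const 2) (Primrec.nat_sub.comp Primrec.id
          (Primrec.const 1))) (Primrec.const 1)))
    (Primrec.ite (Primrec.eq.comp Primrec.fst (Primrec.const 0)) (Primrec.const 1)
      Primrec.snd)
  refine ⟨eR, eΨ, fun P hP => ?_⟩
  obtain ⟨y0, hy0⟩ := hP
  refine ⟨right P, hR P, hy0.2.1, fun q hq => ?_⟩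
  refine ⟨cons 1 q, ?_, hy0.1, hy0.2.1, Or.inr ⟨q, hq, rfl⟩⟩
  have := hΨ (pair P q)
  have heq : (fun n => if n = 0 then 1 else
      (pair P q) (if n = 0 then 0 else 2 * (n - 1) + 1)) = cons 1 q := by
    funext n
    cases n with
    | zero => rfl
    | succ n =>
      simp [cons_succ, pair_odd]
  rwa [heq] at this

/-- Case 1 of part (b): two distinct sets sharing reduction codes to `hh` yield `f ≤ hh`. -/
lemma partB_case1 {f hh : Problem} {D D' : Set ℕ} {α β : ℕ} {nd : ℕ}
    (hn1 : nd ∈ D) (hn2 : nd ∉ D')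
    (hD : Red (meet (chi D) f) hh α β) (hD' : Red (meet (chi D') f) hh α β) :
    WLE f hh := by
  obtain ⟨eΦ, hΦ⟩ := exists_pre (σ := fun j => if j % 2 = 0 then 0 else (j - 1) / 2)
    (g := fun j v => if j % 2 = 0 then nd else v)
    (Primrec.ite (Primrec.eq.comp (Primrec.nat_mod.comp Primrec.id (Primrec.const 2))
        (Primrec.const 0)) (Primrec.const 0)
      (Primrec.nat_div.comp (Primrec.nat_sub.comp Primrec.id (Primrec.const 1))
        (Primrec.const 2)))
    (Primrec.ite (Primrec.eq.comp
        (Primrec.nat_mod.comp Primrec.fst (Primrec.const 2)) (Primrec.const 0))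
      (Primrec.const nd) Primrec.snd)
    (by intro j m h
        show (if j % 2 = 0 then 0 else (j - 1) / 2) < m
        split <;> omega) α
  obtain ⟨c₁, hc₁⟩ := exists_pre
    (σ := fun j => if j % 2 = 1 then j else (if j % 4 = 0 then 0 else j / 2 - 1))
    (g := fun j v => if j % 2 = 1 then v else (if j % 4 = 0 then nd else v))
    (Primrec.ite (Primrec.eq.comp (Primrec.nat_mod.comp Primrec.id (Primrec.const 2))
        (Primrec.const 1)) Primrec.id
      (Primrec.ite (Primrec.eq.comp (Primrec.nat_mod.comp Primrec.id (Primrec.const 4))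
          (Primrec.const 0)) (Primrec.const 0)
        (Primrec.nat_sub.comp
          (Primrec.nat_div.comp Primrec.id (Primrec.const 2)) (Primrec.const 1))))
    (Primrec.ite (Primrec.eq.comp
        (Primrec.nat_mod.comp Primrec.fst (Primrec.const 2)) (Primrec.const 1))
      Primrec.snd
      (Primrec.ite (Primrec.eq.comp
          (Primrec.nat_mod.comp Primrec.fst (Primrec.const 4)) (Primrec.const 0))
        (Primrec.const nd) Primrec.snd))
    (by intro j m h
        show (if j % 2 = 1 then j else (if j % 4 = 0 then 0 else j / 2 - 1)) < m
        split
        · omega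
        · split <;> omega) β
  obtain ⟨c₂, hc₂⟩ := exists_post (σ := fun n => n + 1) (g := fun _ v => v)
    (Primrec.nat_add.comp Primrec.id (Primrec.const 1)) Primrec₂.right c₁
  refine ⟨eΦ, c₂, fun p hp => ?_⟩
  have hdomx : ∀ E : Set ℕ, pair (const nd) p ∈ dom (meet (chi E) f) := by
    intro E
    obtain ⟨r0, hr0⟩ := hp
    refine ⟨cons 1 r0, ?_, ?_, Or.inr ⟨r0, ?_, rfl⟩⟩
    · rw [left_pair]
      exact ⟨_, chi_bit_mem E nd⟩
    · rw [right_pair]; exact ⟨r0, hr0⟩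
    · rw [right_pair]; exact hr0
  obtain ⟨P, hP1, hP2, hP3⟩ := hD _ (hdomx D)
  obtain ⟨P', hP1', hP2', hP3'⟩ := hD' _ (hdomx D')
  have hPP : P' = P := feval_unique hP1' hP1
  rw [hPP] at hP3'
  refine ⟨P, ?_, hP2, fun q hq => ?_⟩
  · apply hΦ p (pair (const nd) p) P ?_ hP1
    intro j
    by_cases hj : j % 2 = 0
    · obtain ⟨i, rfl⟩ : ∃ i, j = 2 * i := ⟨j / 2, by omega⟩
      rw [pair_even, if_pos hj]
      rfl
    · obtain ⟨i, rfl⟩ : ∃ i, j = 2 * i + 1 := ⟨j / 2, by omega⟩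
      rw [pair_odd, if_neg hj, if_neg hj]
      have : (2 * i + 1 - 1) / 2 = i := by omega
      rw [this]
  · obtain ⟨r, hr, hrm⟩ := hP3 q hq
    obtain ⟨r', hr', hrm'⟩ := hP3' q hq
    have hrr : r' = r := feval_unique hr' hr
    rw [hrr] at hrm'
    have hfr : ∃ rt, r = cons 1 rt ∧ rt ∈ f p := by
      rcases hrm.2.2 with ⟨z, hz, rfl⟩ | ⟨z, hz, rfl⟩
      · exfalso
        rcases hrm'.2.2 with ⟨z', hz', hzz⟩ | ⟨z', hz', hzz⟩
        · rw [left_pair] at hz hz'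
          have e1 := chi_mem_eq hz
          rw [if_pos hn1] at e1
          have e2 := chi_mem_eq hz'
          rw [if_neg hn2] at e2
          have h01 := congrFun hzz 1
          rw [cons_succ, cons_succ, e1, e2] at h01
          exact absurd h01 (by simp [const])
        · have h01 := congrFun hzz 0
          rw [cons_zero, cons_zero] at h01
          exact absurd h01 (by omega)
      · refine ⟨z, rfl, ?_⟩
        rw [right_pair] at hz
        exact hz
    obtain ⟨rt, rfl, hrt⟩ := hfr
    refine ⟨rt, ?_, hrt⟩
    have h1 : FEval c₁ (pair p q) (cons 1 rt) := by
      apply hc₁ (pair p q) (pair (pair (const nd) p) q) _ ?_ hr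
      intro j
      by_cases hj : j % 2 = 1
      · obtain ⟨i, rfl⟩ : ∃ i, j = 2 * i + 1 := ⟨j / 2, by omega⟩
        rw [pair_odd, if_pos hj, if_pos hj, pair_odd]
      · obtain ⟨i, rfl⟩ : ∃ i, j = 2 * i := ⟨j / 2, by omega⟩
        rw [pair_even, if_neg hj]
        by_cases hi : (2 * i) % 4 = 0
        · obtain ⟨i', rfl⟩ : ∃ i', i = 2 * i' := ⟨i / 2, by omega⟩
          rw [if_pos hi, pair_even]
          rfl
        · obtain ⟨i', rfl⟩ : ∃ i', i = 2 * i' + 1 := ⟨i / 2, by omega⟩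
          rw [pair_odd, if_neg hi, if_neg hj, if_neg hi]
          have : 2 * (2 * i' + 1) / 2 - 1 = 2 * i' := by omega
          rw [this, pair_even]
    have h2 := hc₂ (pair p q) (cons 1 rt) h1
    have heq : (fun n => (cons 1 rt) (n + 1)) = rt := funext fun n => rfl
    rwa [heq] at h2

/-- Case 2 of part (b): a fiber with two members and finite agreement set gives `f ≤ idB`. -/
lemma partB_case2 {f : Problem} {a b : ℕ} {V : Set (Set ℕ)}
    (hV : ∀ D ∈ V, Red f (meet (chi D) f) a b)
    (hVne : ∃ D₀, D₀ ∈ V)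
    (hN : {n : ℕ | ∀ D ∈ V, ∀ D' ∈ V, (n ∈ D ↔ n ∈ D')}.Finite) :
    WLE f idB := by
  obtain ⟨D₀, hD₀⟩ := hVne
  set N := {n : ℕ | ∀ D ∈ V, ∀ D' ∈ V, (n ∈ D ↔ n ∈ D')} with hNdef
  obtain ⟨B, hB⟩ : ∃ B, ∀ n ∈ N, n < B := by
    rcases hN.bddAbove with ⟨B, hB⟩
    exact ⟨B + 1, fun n hn => Nat.lt_succ_of_le (hB hn)⟩
  set tbl : List ℕ := (List.range B).map (fun i => if i ∈ N ∧ i ∈ D₀ then 1 else 0) with htbl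
  set bitfn : ℕ → ℕ := fun v => (tbl[v]?).getD 0 with hbitfn
  have hbit : ∀ n, bitfn n = if n ∈ N ∧ n ∈ D₀ then 1 else 0 := by
    intro n
    by_cases hn : n < B
    · rw [hbitfn]
      simp only [htbl, List.getElem?_map, List.getElem?_range hn, Option.map_some]
      rfl
    · have h1 : tbl[n]? = none := by
        apply List.getElem?_eq_none_iff.2
        simp only [htbl, List.length_map, List.length_range]
        omega
      rw [hbitfn]
      simp only [h1, Option.getD_none]
      rw [if_neg]
      rintro ⟨hnN, -⟩
      exact hn (hB n hnN)
  have hbitprim : Primrec bitfn :=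
    Primrec.option_getD.comp (Primrec.list_getElem?.comp (Primrec.const tbl) Primrec.id)
      (Primrec.const 0)
  obtain ⟨eΨ, hΨ⟩ := exists_pre
    (σ := fun j => if j % 2 = 0 then j else (if j = 1 then 0 else 1))
    (g := fun j v => if j % 2 = 0 then v else (if j = 1 then 0 else bitfn v))
    (Primrec.ite (Primrec.eq.comp (Primrec.nat_mod.comp Primrec.id (Primrec.const 2))
        (Primrec.const 0)) Primrec.id
      (Primrec.ite (Primrec.eq.comp Primrec.id (Primrec.const 1)) (Primrec.const 0)
        (Primrec.const 1)))
    (Primrec.ite (Primrec.eq.comp (Primrec.nat_mod.comp Primrec.fst (Primrec.const 2))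
        (Primrec.const 0)) Primrec.snd
      (Primrec.ite (Primrec.eq.comp Primrec.fst (Primrec.const 1)) (Primrec.const 0)
        (hbitprim.comp Primrec.snd)))
    (by intro j m h
        show (if j % 2 = 0 then j else (if j = 1 then 0 else 1)) < m
        split
        · omega
        · split <;> omega) b
  refine ⟨a, eΨ, fun p hp => ?_⟩
  obtain ⟨P, hP1, hP2, hP3⟩ := hV D₀ hD₀ p hp
  obtain ⟨hdl, hdr⟩ := mem_dom_meet hP2
  have hPconst : left P = const (P 0) := chi_eq_const hdl
  have hD1 : ∃ D₁ ∈ V, (if P 0 ∈ D₁ then 1 else 0) = bitfn (P 0) := by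
    by_cases hnN : P 0 ∈ N
    · refine ⟨D₀, hD₀, ?_⟩
      by_cases hmem : P 0 ∈ D₀
      · rw [if_pos hmem, hbit, if_pos ⟨hnN, hmem⟩]
      · rw [if_neg hmem, hbit, if_neg (by rintro ⟨-, hc⟩; exact hmem hc)]
    · rw [hbit, if_neg (by rintro ⟨hc, -⟩; exact hnN hc)]
      have hdis : ∃ D₂, D₂ ∈ V ∧ ∃ D₂', D₂' ∈ V ∧ ¬ (P 0 ∈ D₂ ↔ P 0 ∈ D₂') := by
        by_contra hcon
        push_neg at hcon
        exact hnN (fun D hD D' hD' => hcon D hD D' hD')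
      obtain ⟨D₂, hD₂, D₂', hD₂', hne⟩ := hdis
      by_cases h1 : P 0 ∈ D₂
      · have h2 : P 0 ∉ D₂' := fun hc => hne ⟨fun _ => hc, fun _ => h1⟩
        exact ⟨D₂', hD₂', if_neg h2⟩
      · exact ⟨D₂, hD₂, if_neg h1⟩
  obtain ⟨D₁, hD₁V, hbit1⟩ := hD1
  obtain ⟨P', hP1', hP2', hP3'⟩ := hV D₁ hD₁V p hp
  have hPP : P' = P := feval_unique hP1' hP1
  rw [hPP] at hP2' hP3'
  have hq' : cons 0 (const (bitfn (P 0))) ∈ meet (chi D₁) f P := by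
    obtain ⟨hdl1, hdr1⟩ := mem_dom_meet hP2'
    refine ⟨hdl1, hdr1, Or.inl ⟨const (bitfn (P 0)), ?_, rfl⟩⟩
    rw [hPconst, ← hbit1]
    exact chi_bit_mem D₁ (P 0)
  obtain ⟨r, hr, hrf⟩ := hP3' _ hq'
  refine ⟨P, hP1, dom_idB P, fun q hq => ?_⟩
  have hqP : q = P := hq
  subst hqP
  refine ⟨r, ?_, hrf⟩
  apply hΨ (pair p q) (pair p (cons 0 (const (bitfn (q 0))))) r ?_ hr
  intro j
  by_cases hj : j % 2 = 0
  · obtain ⟨i, rfl⟩ : ∃ i, j = 2 * i := ⟨j / 2, by omega⟩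
    rw [pair_even, if_pos hj, if_pos hj, pair_even]
  · by_cases hj1 : j = 1
    · subst hj1
      rw [if_neg hj, if_pos rfl]
      rfl
    · obtain ⟨i', rfl⟩ : ∃ i', j = 2 * i' + 3 := ⟨(j - 3) / 2, by omega⟩
      have h3 : 2 * i' + 3 = 2 * (i' + 1) + 1 := by omega
      rw [h3, pair_odd, cons_succ,
          if_neg (by omega : ¬(2 * (i' + 1) + 1) % 2 = 0),
          if_neg (by omega : ¬2 * (i' + 1) + 1 = 1),
          if_neg (by omega : ¬(2 * (i' + 1) + 1) % 2 = 0),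
          if_neg (by omega : ¬2 * (i' + 1) + 1 = 1)]
      rfl

lemma set_infinite_exists_gt {S : Set ℕ} (hS : ¬ S.Finite) (a : ℕ) : ∃ x ∈ S, a < x := by
  by_contra hcon
  push_neg at hcon
  exact hS (Set.Finite.subset (Set.finite_Iic a) hcon)

lemma partB (f hh : Problem) (hsmc : StrongMinimalCover f hh) : WLE f idB := by
  classical
  obtain ⟨⟨hhf, hfh⟩, hmin⟩ := hsmc
  by_contra hid
  have hDle : ∀ D : Set ℕ, ¬ WLE f (meet (chi D) f) → WLE (meet (chi D) f) hh :=
    fun D hD => hmin _ ⟨meet_le_right _ _, hD⟩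
  set cod : Set ℕ → ℕ × ℕ := fun D =>
    if hw : WLE (meet (chi D) f) hh then (hw.choose, hw.choose_spec.choose) else (0, 0)
    with hcoddef
  have hcod : ∀ D : Set ℕ, ¬ WLE f (meet (chi D) f) →
      Red (meet (chi D) f) hh (cod D).1 (cod D).2 := by
    intro D hD
    have hw := hDle D hD
    simp only [hcoddef, dif_pos hw]
    exact hw.choose_spec.choose_spec
  set wit : Set ℕ → ℕ × ℕ := fun D =>
    if hw : WLE f (meet (chi D) f) then (hw.choose, hw.choose_spec.choose) else (0, 0)
    with hwitdef
  have hwit : ∀ D : Set ℕ, WLE f (meet (chi D) f) →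
      Red f (meet (chi D) f) (wit D).1 (wit D).2 := by
    intro D hw
    simp only [hwitdef, dif_pos hw]
    exact hw.choose_spec.choose_spec
  -- Case 1: two distinct non-reducible D share codes
  by_cases hc1 : ∃ D D' : Set ℕ, ¬ WLE f (meet (chi D) f) ∧ ¬ WLE f (meet (chi D') f) ∧
      D ≠ D' ∧ cod D = cod D'
  · obtain ⟨D, D', h1, h2, hne, hcc⟩ := hc1
    have hR1 := hcod D h1
    have hR2 := hcod D' h2
    rw [hcc] at hR1
    have hex : ∃ nd, (nd ∈ D ∧ nd ∉ D') ∨ (nd ∈ D' ∧ nd ∉ D) := by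
      by_contra hcon
      push_neg at hcon
      apply hne
      ext n
      have := hcon n
      tauto
    obtain ⟨nd, hnd | hnd⟩ := hex
    · exact hfh (partB_case1 hnd.1 hnd.2 hR1 hR2)
    · exact hfh (partB_case1 hnd.1 hnd.2 hR2 hR1)
  push_neg at hc1
  have hNc : {D : Set ℕ | ¬ WLE f (meet (chi D) f)}.Countable := by
    apply Set.countable_iff_exists_injOn.2
    refine ⟨fun D => Nat.pair (cod D).1 (cod D).2, fun D hD D' hD' hEq => ?_⟩
    by_contra hne
    have hpq := Nat.pair_eq_pair.1 hEq
    exact hc1 D D' hD hD' hne (Prod.ext hpq.1 hpq.2)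
  set Vab : ℕ → Set (Set ℕ) := fun k =>
    {D | WLE f (meet (chi D) f) ∧ wit D = ((Nat.unpair k).1, (Nat.unpair k).2)} with hVabdef
  set NSet : ℕ → Set ℕ :=
    fun k => {n | ∀ D ∈ Vab k, ∀ D' ∈ Vab k, (n ∈ D ↔ n ∈ D')} with hNSetdef
  set big : ℕ → Prop := fun k => ∃ D ∈ Vab k, ∃ D' ∈ Vab k, D ≠ D' with hbigdef
  by_cases hc2 : ∃ k, big k ∧ (NSet k).Finite
  · obtain ⟨k, hbig, hfin⟩ := hc2
    apply hid
    apply partB_case2 (a := (Nat.unpair k).1) (b := (Nat.unpair k).2) (V := Vab k)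
    · intro D hD
      have hred := hwit D hD.1
      rw [hD.2] at hred
      exact hred
    · obtain ⟨D, hD, -⟩ := hbig
      exact ⟨D, hD⟩
    · exact hfin
  push_neg at hc2
  -- small fibers are subsingletons
  have hsmall : ∀ k, ¬ big k → (Vab k).Subsingleton := by
    intro k hb D hD D' hD'
    by_contra hne
    exact hb ⟨D, hD, D', hD', hne⟩
  set CC : Set (Set ℕ) := {D | ¬ WLE f (meet (chi D) f)} ∪
    ⋃ k : ℕ, {D | D ∈ Vab k ∧ ¬ big k} with hCCdef
  have hCCc : CC.Countable := by
    apply Set.Countable.union hNc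
    apply Set.countable_iUnion
    intro k
    by_cases hb : big k
    · have : {D | D ∈ Vab k ∧ ¬ big k} = ∅ := by
        ext D; simp [hb]
      rw [this]; exact Set.countable_empty
    · exact Set.Subsingleton.countable
        (fun D hD D' hD' => hsmall k hb hD.1 hD'.1)
  obtain ⟨eC, heC⟩ := Set.Countable.exists_eq_range (hCCc.insert ∅)
    ⟨∅, Set.mem_insert _ _⟩
  -- the position sequence
  set pick : ℕ → ℕ → ℕ := fun k prev =>
    if hb : big k then Classical.choose (set_infinite_exists_gt (hc2 k hb) (prev + 1))
    else prev + 2 with hpickdef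
  have hpick_gt : ∀ k prev, prev + 1 < pick k prev := by
    intro k prev
    simp only [hpickdef]
    split
    · rename_i hb
      exact (Classical.choose_spec (set_infinite_exists_gt (hc2 k hb) (prev + 1))).2
    · omega
  have hpick_mem : ∀ k prev, big k → pick k prev ∈ NSet k := by
    intro k prev hb
    simp only [hpickdef, dif_pos hb]
    exact (Classical.choose_spec (set_infinite_exists_gt (hc2 k hb) (prev + 1))).1
  set seq : ℕ → ℕ := fun k => Nat.rec (pick 0 0) (fun k ih => pick (k + 1) ih) k with hseqdef
  have hseq_mem : ∀ k, big k → seq k ∈ NSet k := by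
    intro k hb
    cases k with
    | zero => exact hpick_mem 0 0 hb
    | succ k => exact hpick_mem (k + 1) (seq k) hb
  have hseq_gt : ∀ k, seq k + 1 < seq (k + 1) := fun k => hpick_gt (k + 1) (seq k)
  have hmono : StrictMono seq := strictMono_nat_of_lt_succ (fun k => by
    have := hseq_gt k; omega)
  have hsep : ∀ j k, seq j + 1 ≠ seq k := by
    intro j k
    rcases lt_trichotomy j k with hlt | rfl | hlt
    · have h1 := hseq_gt j
      have h2 : seq (j + 1) ≤ seq k := hmono.le_iff_le.2 hlt
      omega
    · omega
    · have : seq k < seq j := hmono hlt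
      omega
  -- the fiber representatives
  set D0k : ℕ → Set ℕ := fun k => if hb : big k then hb.choose else ∅ with hD0kdef
  have hD0k : ∀ k, big k → D0k k ∈ Vab k := by
    intro k hb
    simp only [hD0kdef, dif_pos hb]
    exact hb.choose_spec.1
  set Dstar : Set ℕ := {x | (∃ k, big k ∧ x = seq k ∧ seq k ∉ D0k k) ∨
    (∃ j, x = seq j + 1 ∧ seq j + 1 ∉ eC j)} with hDstardef
  have hα : ∀ k, big k → (seq k ∈ Dstar ↔ seq k ∉ D0k k) := by
    intro k hb
    constructor
    · rintro (⟨k', hb', he, hn'⟩ | ⟨j, he, -⟩)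
      · rwa [hmono.injective (by omega : seq k' = seq k)] at hn'
      · exact absurd he.symm (hsep j k)
    · intro hn
      exact Or.inl ⟨k, hb, rfl, hn⟩
  have hβ : ∀ j, (seq j + 1 ∈ Dstar ↔ seq j + 1 ∉ eC j) := by
    intro j
    constructor
    · rintro (⟨k, -, he, -⟩ | ⟨j', he, hn⟩)
      · exact absurd he (hsep j k)
      · rwa [hmono.injective (by omega : seq j' = seq j)] at hn
    · intro hn
      exact Or.inr ⟨j, rfl, hn⟩
  have hDCC : Dstar ∉ insert (∅ : Set ℕ) CC ∨ True := Or.inr trivial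
  -- final contradiction
  have hrange : ∀ S ∈ insert (∅ : Set ℕ) CC, ∃ j, eC j = S := by
    intro S hS
    rw [heC] at hS
    exact hS
  have hnotCC : Dstar ∉ insert (∅ : Set ℕ) CC := by
    intro hS
    obtain ⟨j, hj⟩ := hrange Dstar hS
    have hb := hβ j
    rw [hj] at hb
    tauto
  by_cases hw : WLE f (meet (chi Dstar) f)
  · set k := Nat.pair (wit Dstar).1 (wit Dstar).2 with hk
    have hmem : Dstar ∈ Vab k := by
      refine ⟨hw, ?_⟩
      simp only [hk, Nat.unpair_pair]
    by_cases hb : big k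
    · have hag := hseq_mem k hb Dstar hmem (D0k k) (hD0k k hb)
      have := hα k hb
      tauto
    · exact hnotCC (Set.mem_insert_iff.2 (Or.inr (Or.inr
        (Set.mem_iUnion.2 ⟨k, hmem, hb⟩))))
  · exact hnotCC (Set.mem_insert_iff.2 (Or.inr (Or.inl hw)))

/-- The Weihrauch degree of `id` is the greatest degree that is a strong minimal cover. -/
theorem id_greatest_strong_minimal_cover :
    (∃ h : Problem, StrongMinimalCover idB h) ∧
      ∀ f h : Problem, StrongMinimalCover f h → WLE f idB := by
  constructor
  · exact ⟨idRestrict C0ᶜ, ⟨partA1, partA2⟩, partA3⟩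
  · exact fun f h hsmc => partB f h hsmc

end WeihrauchPaper
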